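/- Let Ω ⊆ ℝⁿ be an open set and let S ⊆ Ω be an 𝓗ⁿ⁻¹-measurable set with 𝓗ⁿ⁻¹(S) < ∞. Assume S satisfies the mass ratio lower bound in Ω: for every compact set K ⊆ Ω there exist constants r_K > 0 and λ_K > 0 such that 𝓗ⁿ⁻¹(S ∩ B_r(x)) ≥ λ_K rⁿ⁻¹ for every x ∈ K ∩ cl(S) and every 0 < r < r_K, where cl(S) is the closure of S. Then 𝓗ⁿ⁻¹((cl(S) \ S) ∩ Ω) = 0. -/

import Mathlib

open Set MeasureTheory Metric
open scoped ENNReal NNReal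

/-- If `S ⊆ Ω` is `𝓗ⁿ⁻¹`-measurable with finite `𝓗ⁿ⁻¹`-measure and satisfies the
mass ratio lower bound in the open set `Ω`, then `𝓗ⁿ⁻¹((cl S \ S) ∩ Ω) = 0`. -/
theorem statement4 (n : ℕ) (hn : 2 ≤ n)
    (Ω : Set (EuclideanSpace ℝ (Fin n))) (hΩ : IsOpen Ω)
    (S : Set (EuclideanSpace ℝ (Fin n))) (hSΩ : S ⊆ Ω) (hSm : MeasurableSet S)
    (hSfin : μH[(n : ℝ) - 1] S < ⊤)
    (hmass : ∀ K : Set (EuclideanSpace ℝ (Fin n)), K ⊆ Ω → IsCompact K →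
      ∃ rK : ℝ, 0 < rK ∧ ∃ lK : ℝ, 0 < lK ∧
        ∀ x ∈ K ∩ closure S, ∀ r : ℝ, 0 < r → r < rK →
          ENNReal.ofReal (lK * r ^ (n - 1)) ≤ μH[(n : ℝ) - 1] (S ∩ Metric.ball x r)) :
    μH[(n : ℝ) - 1] ((closure S \ S) ∩ Ω) = 0 := by
  classical
  set d : ℝ := (n : ℝ) - 1 with hd
  set T : Set (EuclideanSpace ℝ (Fin n)) := (closure S \ S) ∩ Ω with hT
  set ν : Measure (EuclideanSpace ℝ (Fin n)) := (μH[d] : Measure (EuclideanSpace ℝ (Fin n))).restrict S with hν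
  haveI : IsFiniteMeasure ν := ⟨by rwa [Measure.restrict_apply_univ]⟩
  have core : ∀ K : Set (EuclideanSpace ℝ (Fin n)), K ⊆ Ω → IsCompact K → μH[d] (T ∩ K) = 0 := by
    intro K hKΩ hKc
    obtain ⟨rK, hrK, lK, hlK, hm⟩ := hmass K hKΩ hKc
    set A : Set (EuclideanSpace ℝ (Fin n)) := T ∩ K with hA
    rcases A.eq_empty_or_nonempty with hAe | hAne
    · simp [hAe]
    have hνA : ν A = 0 := by
      rw [Measure.restrict_apply' hSm]
      have : A ∩ S = ∅ := by
        rw [eq_empty_iff_forall_notMem]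
        rintro y ⟨hyA, hyS⟩
        exact hyA.1.1.2 hyS
      simp [this]
    set C : ℝ≥0∞ := ENNReal.ofReal ((10 : ℝ) ^ d / lK) with hC
    have hCr : (0:ℝ) < (10 : ℝ) ^ d / lK := div_pos (Real.rpow_pos_of_pos (by norm_num) d) hlK
    have hC0 : C ≠ 0 := by rw [hC]; exact (ENNReal.ofReal_pos.2 hCr).ne'
    have hCt : C ≠ ⊤ := ENNReal.ofReal_ne_top
    have main : ∀ ε : ℝ≥0∞, 0 < ε → μH[d] A ≤ C * ε := by
      intro ε hε
      have hνlt : ν A < ε := by rw [hνA]; exact hε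
      obtain ⟨U, hAU, hUo, hUε⟩ := Set.exists_isOpen_lt_of_lt A ε hνlt
      obtain ⟨R, hR⟩ := hKc.isBounded.subset_closedBall 0
      set R' : ℝ := max R 0 with hR'
      set U' : Set (EuclideanSpace ℝ (Fin n)) := U ∩ ball 0 (R' + 1) with hU'
      have hU'o : IsOpen U' := hUo.inter isOpen_ball
      have hAU' : A ⊆ U' := by
        intro a ha
        refine ⟨hAU ha, ?_⟩
        have h1 : dist a 0 ≤ R := mem_closedBall.1 (hR ha.2)
        have h2 : R ≤ R' := le_max_left _ _
        rw [mem_ball]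
        linarith
      have hU'c : U'ᶜ.Nonempty := by
        refine ⟨EuclideanSpace.single (⟨0, by omega⟩ : Fin n) (R' + 1), fun hmem => ?_⟩
        have h2 := hmem.2
        rw [mem_ball, dist_zero_right, EuclideanSpace.norm_single, Real.norm_eq_abs,
          abs_of_nonneg (by positivity)] at h2
        exact lt_irrefl _ h2
      have hd0 : 0 ≤ d := by
        rw [hd]
        have : (2 : ℝ) ≤ (n : ℝ) := by exact_mod_cast hn
        linarith
      rw [MeasureTheory.Measure.hausdorffMeasure_apply]
      refine iSup₂_le fun r hr => ?_
      have hminne : min 1 r ≠ ⊤ := ne_top_of_le_ne_top (by norm_num) (min_le_left _ _)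
      obtain ⟨δ, hδ0, hδr⟩ : ∃ δ : ℝ, 0 < δ ∧ ENNReal.ofReal δ ≤ r := by
        refine ⟨(min 1 r).toReal, ENNReal.toReal_pos ?_ hminne, ?_⟩
        · exact (lt_min (by norm_num) hr).ne'
        · rw [ENNReal.ofReal_toReal hminne]
          exact min_le_right _ _
      set ρ : EuclideanSpace ℝ (Fin n) → ℝ :=
        fun a => min (min (rK / 2) (δ / 20)) (infDist a U'ᶜ / 2) with hρ
      have hρpos : ∀ a ∈ A, 0 < ρ a := by
        intro a ha
        have h1 : 0 < infDist a U'ᶜ :=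
          ((hU'o.isClosed_compl).notMem_iff_infDist_pos hU'c).1 (fun h => h (hAU' ha))
        simp only [hρ, lt_min_iff]
        exact ⟨⟨by linarith, by linarith⟩, by linarith⟩
      have hρδ : ∀ a, ρ a ≤ δ / 20 := fun a => (min_le_left _ _).trans (min_le_right _ _)
      have hρrK : ∀ a, ρ a < rK := fun a =>
        lt_of_le_of_lt ((min_le_left _ _).trans (min_le_left _ _)) (by linarith)
      have hρU : ∀ a ∈ A, closedBall a (ρ a) ⊆ U' := by
        intro a ha y hy
        by_contra hyU
        have h1 : infDist a U'ᶜ ≤ dist a y := infDist_le_dist_of_mem hyU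
        have h2 : dist y a ≤ ρ a := mem_closedBall.1 hy
        have h3 : ρ a ≤ infDist a U'ᶜ / 2 := min_le_right _ _
        rw [dist_comm] at h1
        have h4 := hρpos a ha
        linarith
      obtain ⟨u, huA, hdisj, hcov⟩ :=
        Vitali.exists_disjoint_subfamily_covering_enlargement_closedBall A id ρ (δ / 20)
          (fun a _ => hρδ a) 5 (by norm_num)
      have hucnt : u.Countable := by
        refine hdisj.countable_of_nonempty_interior fun b hb => ?_
        exact ⟨b, ball_subset_interior_closedBall (mem_ball_self (hρpos b (huA hb)))⟩
      have hune : u.Nonempty := by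
        obtain ⟨a, ha⟩ := hAne
        obtain ⟨b, hb, -⟩ := hcov a ha
        exact ⟨b, hb⟩
      obtain ⟨f, hfu⟩ := hucnt.exists_eq_range hune
      have hfA : ∀ k, f k ∈ A := fun k => huA (hfu ▸ ⟨k, rfl⟩)
      set sel : ℕ → Prop := fun k => ∀ j, j < k → f j ≠ f k with hsel
      set t : ℕ → Set (EuclideanSpace ℝ (Fin n)) :=
        fun k => if sel k then closedBall (f k) (5 * ρ (f k)) else ∅ with ht'
      have htk : ∀ k, sel k → t k = closedBall (f k) (5 * ρ (f k)) := fun k hk => by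
        simp only [ht']; exact if_pos hk
      have htk' : ∀ k, ¬ sel k → t k = ∅ := fun k hk => by
        simp only [ht']; exact if_neg hk
      have hcover : A ⊆ ⋃ k, t k := by
        intro a ha
        obtain ⟨b, hb, hbsub⟩ := hcov a ha
        have hab : a ∈ closedBall b (5 * ρ b) :=
          hbsub (mem_closedBall_self (hρpos a ha).le)
        rw [hfu] at hb
        have hex : ∃ m, f m = b := hb.imp fun m hm => hm
        have hsel0 : sel (Nat.find hex) := fun j hj hjeq =>
          Nat.find_min hex hj (hjeq.trans (Nat.find_spec hex))
        refine mem_iUnion.2 ⟨Nat.find hex, ?_⟩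
        rw [htk _ hsel0, Nat.find_spec hex]
        exact hab
      have hdiamball : ∀ k, sel k →
          EMetric.diam (t k) ≤ ENNReal.ofReal (10 * ρ (f k)) := by
        intro k hk
        rw [htk k hk]
        refine EMetric.diam_le fun y hy z hz => ?_
        rw [edist_dist]
        refine ENNReal.ofReal_le_ofReal ?_
        have h1 := mem_closedBall.1 hy
        have h2 := mem_closedBall.1 hz
        have h3 := dist_triangle_right y z (f k)
        linarith
      have hdiam : ∀ k, EMetric.diam (t k) ≤ r := by
        intro k
        by_cases hk : sel k
        · refine le_trans (hdiamball k hk) (le_trans ?_ hδr)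
          refine ENNReal.ofReal_le_ofReal ?_
          have := hρδ (f k)
          linarith
        · rw [htk' k hk]; exact (Metric.ediam_empty).trans_le zero_le
      set B : ℕ → Set (EuclideanSpace ℝ (Fin n)) :=
        fun k => if sel k then closedBall (f k) (ρ (f k)) else ∅ with hB
      have hfmem : ∀ k, f k ∈ u := fun k => hfu ▸ ⟨k, rfl⟩
      have hBk : ∀ k, sel k → B k = closedBall (f k) (ρ (f k)) := fun k hk => by
        simp only [hB]; exact if_pos hk
      have hBk' : ∀ k, ¬ sel k → B k = ∅ := fun k hk => by
        simp only [hB]; exact if_neg hk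
      have hBdisj : Pairwise (Function.onFun Disjoint B) := by
        intro k j hkj
        by_cases hk : sel k
        · by_cases hj : sel j
          · have hne : f k ≠ f j := by
              rcases lt_or_gt_of_ne hkj with h | h
              · exact fun he => hj k h he
              · exact fun he => hk j h he.symm
            have := hdisj (hfmem k) (hfmem j) hne
            simp only [Function.onFun]
            rw [hBk k hk, hBk j hj]
            exact this
          · simp [Function.onFun, hBk' j hj]
        · simp [Function.onFun, hBk' k hk]
      have hBm : ∀ k, MeasurableSet (B k) := by
        intro k
        by_cases hk : sel k
        · rw [hBk k hk]; exact measurableSet_closedBall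
        · rw [hBk' k hk]; exact MeasurableSet.empty
      have hsum2 : ∑' k, ν (B k) ≤ ν U' := by
        rw [← measure_iUnion hBdisj hBm]
        refine measure_mono (iUnion_subset fun k => ?_)
        by_cases hk : sel k
        · rw [hBk k hk]; exact hρU (f k) (hfA k)
        · rw [hBk' k hk]; exact empty_subset _
      have hterm : ∀ k, (⨆ _ : (t k).Nonempty, EMetric.diam (t k) ^ d) ≤ C * ν (B k) := by
        intro k
        by_cases hk : sel k
        · refine iSup_le fun _ => ?_
          have hbA : f k ∈ A := hfA k
          have hρb : 0 < ρ (f k) := hρpos _ hbA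
          have hdpow : EMetric.diam (t k) ^ d ≤ ENNReal.ofReal ((10 * ρ (f k)) ^ d) := by
            calc EMetric.diam (t k) ^ d ≤ (ENNReal.ofReal (10 * ρ (f k))) ^ d :=
                  ENNReal.rpow_le_rpow (hdiamball k hk) hd0
              _ = ENNReal.ofReal ((10 * ρ (f k)) ^ d) :=
                  ENNReal.ofReal_rpow_of_pos (by linarith)
          have hρd : ρ (f k) ^ d = ρ (f k) ^ (n - 1) := by
            rw [← Real.rpow_natCast (ρ (f k)) (n - 1)]
            congr 1
            rw [hd, Nat.cast_sub (by omega : 1 ≤ n), Nat.cast_one]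
          have hreal : (10 * ρ (f k)) ^ d = (10 : ℝ) ^ d / lK * (lK * ρ (f k) ^ (n - 1)) := by
            rw [Real.mul_rpow (by norm_num) hρb.le, hρd]
            field_simp
          have hmass' : ENNReal.ofReal (lK * ρ (f k) ^ (n - 1)) ≤ ν (B k) := by
            have hν' : ν (B k) = μH[d] (B k ∩ S) := by
              rw [hν, Measure.restrict_apply' hSm]
            rw [hν']
            calc ENNReal.ofReal (lK * ρ (f k) ^ (n - 1))
                ≤ μH[d] (S ∩ ball (f k) (ρ (f k))) :=
                  hm (f k) ⟨hbA.2, hbA.1.1.1⟩ (ρ (f k)) hρb (hρrK _)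
              _ ≤ μH[d] (B k ∩ S) := by
                  refine measure_mono fun y hy => ?_
                  rw [hBk k hk]
                  exact ⟨ball_subset_closedBall hy.2, hy.1⟩
          calc EMetric.diam (t k) ^ d ≤ ENNReal.ofReal ((10 * ρ (f k)) ^ d) := hdpow
            _ = ENNReal.ofReal ((10 : ℝ) ^ d / lK) * ENNReal.ofReal (lK * ρ (f k) ^ (n - 1)) := by
                rw [hreal, ENNReal.ofReal_mul hCr.le]
            _ ≤ C * ν (B k) := by rw [hC]; exact mul_le_mul_right hmass' _
        · simp [htk' k hk]
      refine iInf₂_le_of_le t hcover (le_trans (iInf_le _ hdiam) ?_)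
      calc ∑' k, ⨆ _ : (t k).Nonempty, EMetric.diam (t k) ^ d
          ≤ ∑' k, C * ν (B k) := ENNReal.tsum_le_tsum hterm
        _ = C * ∑' k, ν (B k) := ENNReal.tsum_mul_left
        _ ≤ C * ν U' := mul_le_mul_right hsum2 _
        _ ≤ C * ν U := mul_le_mul_right (measure_mono inter_subset_left) _
        _ ≤ C * ε := mul_le_mul_right hUε.le _
    refine le_antisymm ?_ (zero_le)
    refine ENNReal.le_of_forall_pos_le_add fun ε hε _ => ?_
    have hε' : (0:ℝ≥0∞) < (ε : ℝ≥0∞) / C :=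
      ENNReal.div_pos (by exact_mod_cast hε.ne') hCt
    calc μH[d] A ≤ C * ((ε : ℝ≥0∞) / C) := main _ hε'
      _ = ε := ENNReal.mul_div_cancel hC0 hCt
      _ ≤ 0 + ε := by simp
  refine measure_null_of_locally_null _ fun x hx => ?_
  obtain ⟨K, hKc, hxK, hKΩ⟩ := exists_compact_subset hΩ hx.2
  refine ⟨T ∩ K, ?_, core K hKΩ hKc⟩
  exact inter_mem_nhdsWithin T (mem_nhds_iff.2 ⟨interior K, interior_subset, isOpen_interior, hxK⟩)
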